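/- Let N ≥ 1, 0 < γ < min{2, N} and p > p_γ := 1 + (2−γ)/N. Then there exists a constant C_* > 0, depending only on N, p and γ, with the following property: if μ is a nonnegative measurable function on ℝ^N and there exists δ > 0 such that μ(x) ≥ C_* |x|^{−(2−γ)/(p−1)} for almost every x ∈ B(0,δ), then for every T > 0 there is no solution of the Hardy parabolic equation ∂_t u − Δu = |x|^{-γ} u^p with initial data μ on ℝ^N × [0,T). -/

import Mathlib

open MeasureTheory Real
open scoped ENNReal NNReal

/-- The Gaussian heat kernel on `ℝ^N`. -/
noncomputable def G (N : ℕ) (x : EuclideanSpace ℝ (Fin N)) (t : ℝ) : ℝ :=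
  (4 * Real.pi * t) ^ (-(N : ℝ) / 2) * Real.exp (-‖x‖ ^ 2 / (4 * t))

/-- The right-hand side of the Duhamel formulation of the Hardy parabolic equation
`∂_t u - Δu = |x|^{-γ} u^p` with a nonnegative measurable function `μ` as initial data. -/
noncomputable def hardyRHSFun (N : ℕ) (p γ : ℝ) (μ : EuclideanSpace ℝ (Fin N) → ℝ)
    (u : EuclideanSpace ℝ (Fin N) → ℝ → ℝ) (x : EuclideanSpace ℝ (Fin N)) (t : ℝ) : ℝ≥0∞ :=
  (∫⁻ y, ENNReal.ofReal (G N (x - y) t * μ y)) +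
    ∫⁻ s in Set.Ioo (0 : ℝ) t,
      ∫⁻ y, ENNReal.ofReal (G N (x - y) (t - s) * ‖y‖ ^ (-γ) * u y s ^ p)

/-- `u` is a solution of the Hardy parabolic equation `∂_t u - Δu = |x|^{-γ} u^p`
with initial data the nonnegative measurable function `μ` on `ℝ^N × [0,T)`. -/
def IsSolutionFun (N : ℕ) (p γ : ℝ) (μ : EuclideanSpace ℝ (Fin N) → ℝ) (T : ℝ)
    (u : EuclideanSpace ℝ (Fin N) → ℝ → ℝ) : Prop :=
  Measurable (Function.uncurry u) ∧ (∀ x t, 0 ≤ u x t) ∧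
    ∀ᵐ x ∂(volume : Measure (EuclideanSpace ℝ (Fin N))), ∀ t : ℝ, 0 < t → t < T →
      hardyRHSFun N p γ μ u x t ≠ ⊤ ∧ ENNReal.ofReal (u x t) = hardyRHSFun N p γ μ u x t


open Metric
lemma sqrt_rpow_half {t : ℝ} (ht : 0 < t) (b : ℝ) : t ^ (b / 2) = Real.sqrt t ^ b := by
  rw [Real.sqrt_eq_rpow, ← Real.rpow_mul ht.le]
  congr 1; ring

lemma G_lower (N : ℕ) {z : EuclideanSpace ℝ (Fin N)} {t r : ℝ} (hr : 0 < r)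
    (h1 : r / 2 ≤ t) (h2 : t ≤ r) (hz : ‖z‖ ≤ 3 * Real.sqrt r) :
    (4 * Real.pi * r) ^ (-(N : ℝ) / 2) * Real.exp (-(9 / 2)) ≤ G N z t := by
  have ht : 0 < t := by linarith
  have hpi := Real.pi_pos
  have h4t : (0 : ℝ) < 4 * Real.pi * t := by positivity
  have hb : (4 * Real.pi * r) ^ (-(N : ℝ) / 2) ≤ (4 * Real.pi * t) ^ (-(N : ℝ) / 2) := by
    apply Real.rpow_le_rpow_of_nonpos h4t (by nlinarith)
    have : (0 : ℝ) ≤ (N : ℝ) := Nat.cast_nonneg N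
    linarith
  have hz2 : ‖z‖ ^ 2 ≤ 9 * r := by
    have h' : (3 * Real.sqrt r) ^ 2 = 9 * r := by
      rw [mul_pow, Real.sq_sqrt hr.le]; norm_num
    nlinarith [norm_nonneg z]
  have he : Real.exp (-(9 / 2)) ≤ Real.exp (-‖z‖ ^ 2 / (4 * t)) := by
    apply Real.exp_le_exp.2
    rw [neg_div, neg_le_neg_iff, div_le_iff₀ (by linarith : (0:ℝ) < 4 * t)]
    nlinarith
  exact mul_le_mul hb he (Real.exp_pos _).le (Real.rpow_nonneg h4t.le _)

lemma setLIntegral_ge {α : Type*} [MeasurableSpace α] {μ : Measure α} {f : α → ℝ≥0∞}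
    {s : Set α} (hs : MeasurableSet s) {C : ℝ≥0∞}
    (h : ∀ᵐ y ∂μ, y ∈ s → C ≤ f y) : C * μ s ≤ ∫⁻ y in s, f y ∂μ := by
  calc C * μ s = ∫⁻ _ in s, C ∂μ := (setLIntegral_const s C).symm
    _ ≤ ∫⁻ y in s, f y ∂μ := lintegral_mono_ae ((ae_restrict_iff' hs).2 h)

lemma lintegral_ge {α : Type*} [MeasurableSpace α] {μ : Measure α} {f : α → ℝ≥0∞}
    {s : Set α} (hs : MeasurableSet s) {C : ℝ≥0∞}
    (h : ∀ᵐ y ∂μ, y ∈ s → C ≤ f y) : C * μ s ≤ ∫⁻ y, f y ∂μ :=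
  le_trans (setLIntegral_ge hs h) (setLIntegral_le_lintegral s f)

lemma vol_ball (N : ℕ) (hN : 1 ≤ N) (x : EuclideanSpace ℝ (Fin N)) {r : ℝ} (hr : 0 ≤ r) :
    volume (ball x r) =
      ENNReal.ofReal (r ^ N * (volume (ball (0 : EuclideanSpace ℝ (Fin N)) 1)).toReal) := by
  haveI : Nonempty (Fin N) := ⟨⟨0, hN⟩⟩
  haveI : Nontrivial (EuclideanSpace ℝ (Fin N)) := inferInstance
  rw [Measure.addHaar_ball volume x hr, finrank_euclideanSpace_fin,
    ENNReal.ofReal_mul (by positivity), ENNReal.ofReal_toReal measure_ball_lt_top.ne]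

lemma base_bound (N : ℕ) (hN : 1 ≤ N) (p γ : ℝ) (hγ2 : γ < 2) (hp1 : 1 < p) :
    ∃ c1 : ℝ, 0 < c1 ∧
    ∀ (μ : EuclideanSpace ℝ (Fin N) → ℝ) (Cstar : ℝ), 0 < Cstar →
    ∀ δ : ℝ, 0 < δ →
    (∀ᵐ x ∂(volume : Measure (EuclideanSpace ℝ (Fin N))),
        x ∈ Metric.ball (0 : EuclideanSpace ℝ (Fin N)) δ →
        Cstar * ‖x‖ ^ (-(2 - γ) / (p - 1)) ≤ μ x) →
    ∀ (T : ℝ) (u : EuclideanSpace ℝ (Fin N) → ℝ → ℝ), IsSolutionFun N p γ μ T u →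
    ∀ᵐ x ∂(volume : Measure (EuclideanSpace ℝ (Fin N))), ∀ t : ℝ, 0 < t → t < T →
      t < δ ^ 2 / 4 → ‖x‖ ≤ Real.sqrt t →
      c1 * Cstar * t ^ (-(2 - γ) / (p - 1) / 2) ≤ u x t := by
  have hppos : 0 < p - 1 := by linarith
  set X : ℝ := -(2 - γ) / (p - 1) with hX
  have hXneg : X < 0 := div_neg_of_neg_of_pos (by linarith) hppos
  set ω : ℝ := (volume (ball (0 : EuclideanSpace ℝ (Fin N)) 1)).toReal with hω
  have hωpos : 0 < ω :=
    ENNReal.toReal_pos (measure_ball_pos volume 0 one_pos).ne' measure_ball_lt_top.ne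
  refine ⟨(4 * Real.pi) ^ (-(N : ℝ) / 2) * Real.exp (-(9 / 2)) * (2 : ℝ) ^ X *
      ((2 : ℝ) ^ N)⁻¹ * ω, by positivity, ?_⟩
  set c1 : ℝ := (4 * Real.pi) ^ (-(N : ℝ) / 2) * Real.exp (-(9 / 2)) * (2 : ℝ) ^ X *
      ((2 : ℝ) ^ N)⁻¹ * ω with hc1
  intro μ Cstar hC δ hδ hμae T u hu
  obtain ⟨-, hunn, hae⟩ := hu
  filter_upwards [hae] with x hx t ht htT htδ hxt
  set st := Real.sqrt t with hstdef
  have hst : 0 < st := Real.sqrt_pos.2 ht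
  have hkey := (hx t ht htT).2
  set v : EuclideanSpace ℝ (Fin N) := EuclideanSpace.single (⟨0, hN⟩ : Fin N) (1 : ℝ) with hv
  have hvnorm : ‖v‖ = 1 := by rw [hv, EuclideanSpace.norm_single]; norm_num
  set ctr : EuclideanSpace ℝ (Fin N) := ((3 / 2) * st) • v with hctr
  have hctrnorm : ‖ctr‖ = (3 / 2) * st := by
    rw [hctr, norm_smul, hvnorm, mul_one, Real.norm_eq_abs, abs_of_pos (by positivity)]
  have hstδ : 2 * st < δ := by
    have h2 : Real.sqrt (δ ^ 2 / 4) = δ / 2 := by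
      rw [show δ ^ 2 / 4 = (δ / 2) ^ 2 by ring, Real.sqrt_sq (by positivity)]
    have h1 : st < δ / 2 := h2 ▸ Real.sqrt_lt_sqrt ht.le htδ
    linarith
  have hmem : ∀ y ∈ ball ctr (st / 2), st < ‖y‖ ∧ ‖y‖ < 2 * st := by
    intro y hy
    rw [Metric.mem_ball, dist_eq_norm] at hy
    have h1 : ‖ctr‖ - ‖y‖ ≤ ‖y - ctr‖ := by
      rw [norm_sub_rev]; exact norm_sub_norm_le ctr y
    have h2 : ‖y‖ - ‖ctr‖ ≤ ‖y - ctr‖ := norm_sub_norm_le y ctr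
    rw [hctrnorm] at h1 h2
    constructor <;> linarith
  have h4πt : (0 : ℝ) < 4 * Real.pi * t := by have := Real.pi_pos; positivity
  set K : ℝ := (4 * Real.pi * t) ^ (-(N : ℝ) / 2) * Real.exp (-(9 / 2)) *
      (Cstar * ((2 : ℝ) ^ X * st ^ X)) with hK
  have hKnn : 0 ≤ K := by
    apply mul_nonneg (mul_nonneg (Real.rpow_nonneg h4πt.le _) (Real.exp_pos _).le)
    positivity
  have hinner : ∀ᵐ y ∂(volume : Measure (EuclideanSpace ℝ (Fin N))), y ∈ ball ctr (st / 2) →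
      ENNReal.ofReal K ≤ ENNReal.ofReal (G N (x - y) t * μ y) := by
    filter_upwards [hμae] with y hμy hyS
    obtain ⟨hy1, hy2⟩ := hmem y hyS
    have hyδ : y ∈ ball (0 : EuclideanSpace ℝ (Fin N)) δ := by
      rw [mem_ball_zero_iff]; linarith
    have hμ2 : Cstar * ((2 : ℝ) ^ X * st ^ X) ≤ μ y := by
      refine le_trans ?_ (hμy hyδ)
      rw [← Real.mul_rpow (by norm_num) hst.le]
      exact mul_le_mul_of_nonneg_left
        (Real.rpow_le_rpow_of_nonpos (by linarith) hy2.le hXneg.le) hC.le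
    have hG : (4 * Real.pi * t) ^ (-(N : ℝ) / 2) * Real.exp (-(9 / 2)) ≤ G N (x - y) t := by
      refine G_lower N ht (by linarith) le_rfl ?_
      have h3 := norm_sub_le x y
      rw [← hstdef]; linarith
    apply ENNReal.ofReal_le_ofReal
    rw [hK]
    exact mul_le_mul hG hμ2 (by positivity)
      (le_trans (mul_nonneg (Real.rpow_nonneg h4πt.le _) (Real.exp_pos _).le) hG)
  have hchain : ENNReal.ofReal (K * ((st / 2) ^ N * ω)) ≤ ENNReal.ofReal (u x t) := by
    rw [hkey]
    refine le_trans ?_ (self_le_add_right _ _)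
    calc ENNReal.ofReal (K * ((st / 2) ^ N * ω))
        = ENNReal.ofReal K * volume (ball ctr (st / 2)) := by
          rw [vol_ball N hN ctr (by positivity : (0:ℝ) ≤ st / 2), ← hω,
            ← ENNReal.ofReal_mul hKnn]
      _ ≤ ∫⁻ y, ENNReal.ofReal (G N (x - y) t * μ y) := lintegral_ge measurableSet_ball hinner
  have hreal : c1 * Cstar * t ^ (X / 2) ≤ K * ((st / 2) ^ N * ω) := by
    apply le_of_eq
    have r1 : (4 * Real.pi * t) ^ (-(N : ℝ) / 2) =
        (4 * Real.pi) ^ (-(N : ℝ) / 2) * (st ^ N)⁻¹ := by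
      rw [Real.mul_rpow (by positivity) ht.le]
      congr 1
      rw [sqrt_rpow_half ht (-(N : ℝ)), ← hstdef, Real.rpow_neg hst.le, Real.rpow_natCast]
    have r2 : t ^ (X / 2) = st ^ X := by rw [sqrt_rpow_half ht X, ← hstdef]
    rw [hK, hc1, r1, r2, div_pow]
    have hstN : (st : ℝ) ^ N ≠ 0 := pow_ne_zero _ hst.ne'
    field_simp
  exact (ENNReal.ofReal_le_ofReal_iff (hunn x t)).1
    (le_trans (ENNReal.ofReal_le_ofReal hreal) hchain)

lemma step_bound (N : ℕ) (hN : 1 ≤ N) (p γ : ℝ) (hγ0 : 0 < γ) (hγ2 : γ < 2) (hp1 : 1 < p) :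
    ∃ c2 : ℝ, 0 < c2 ∧
    ∀ (μ : EuclideanSpace ℝ (Fin N) → ℝ) (T : ℝ) (u : EuclideanSpace ℝ (Fin N) → ℝ → ℝ),
      IsSolutionFun N p γ μ T u →
    ∀ τ : ℝ, τ ≤ T → ∀ d : ℝ, 0 ≤ d →
    (∀ᵐ y ∂(volume : Measure (EuclideanSpace ℝ (Fin N))), ∀ s : ℝ, 0 < s → s < τ →
        ‖y‖ ≤ Real.sqrt s → d * s ^ (-(2 - γ) / (p - 1) / 2) ≤ u y s) →
    ∀ᵐ x ∂(volume : Measure (EuclideanSpace ℝ (Fin N))), ∀ t : ℝ, 0 < t → t < τ →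
        ‖x‖ ≤ Real.sqrt t →
        c2 * d ^ p * t ^ (-(2 - γ) / (p - 1) / 2) ≤ u x t := by
  have hppos : 0 < p - 1 := by linarith
  set X : ℝ := -(2 - γ) / (p - 1) with hX
  have hXneg : X < 0 := div_neg_of_neg_of_pos (by linarith) hppos
  have hXp : X * p - X = γ - 2 := by
    have h : X * (p - 1) = -(2 - γ) := by rw [hX]; field_simp
    rw [mul_sub, mul_one] at h; linarith
  set ω : ℝ := (volume (ball (0 : EuclideanSpace ℝ (Fin N)) 1)).toReal with hω
  have hωpos : 0 < ω :=
    ENNReal.toReal_pos (measure_ball_pos volume 0 one_pos).ne' measure_ball_lt_top.ne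
  refine ⟨(4 * Real.pi) ^ (-(N : ℝ) / 2) * Real.exp (-(9 / 2)) *
      ((4 : ℝ) ^ N)⁻¹ * ω / 4, by positivity, ?_⟩
  set c2 : ℝ := (4 * Real.pi) ^ (-(N : ℝ) / 2) * Real.exp (-(9 / 2)) *
      ((4 : ℝ) ^ N)⁻¹ * ω / 4 with hc2
  intro μ T u hu τ hτT d hd hIH
  obtain ⟨-, hunn, hae⟩ := hu
  filter_upwards [hae] with x hx t ht htτ hxt
  set st := Real.sqrt t with hstdef
  have hst : 0 < st := Real.sqrt_pos.2 ht
  have hkey := (hx t ht (lt_of_lt_of_le htτ hτT)).2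
  set v : EuclideanSpace ℝ (Fin N) := EuclideanSpace.single (⟨0, hN⟩ : Fin N) (1 : ℝ) with hv
  have hvnorm : ‖v‖ = 1 := by rw [hv, EuclideanSpace.norm_single]; norm_num
  set ctr : EuclideanSpace ℝ (Fin N) := (st / 4) • v with hctr
  have hctrnorm : ‖ctr‖ = st / 4 := by
    rw [hctr, norm_smul, hvnorm, mul_one, Real.norm_eq_abs, abs_of_pos (by positivity)]
  have hmem : ∀ y ∈ ball ctr (st / 4), 0 < ‖y‖ ∧ ‖y‖ < st / 2 := by
    intro y hy
    rw [Metric.mem_ball, dist_eq_norm] at hy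
    have h1 : ‖ctr‖ - ‖y‖ ≤ ‖y - ctr‖ := by
      rw [norm_sub_rev]; exact norm_sub_norm_le ctr y
    have h2 : ‖y‖ - ‖ctr‖ ≤ ‖y - ctr‖ := norm_sub_norm_le y ctr
    rw [hctrnorm] at h1 h2
    constructor <;> linarith
  have h4πt : (0 : ℝ) < 4 * Real.pi * t := by have := Real.pi_pos; positivity
  set K : ℝ := (4 * Real.pi * t) ^ (-(N : ℝ) / 2) * Real.exp (-(9 / 2)) * st ^ (-γ) *
      (d * t ^ (X / 2)) ^ p with hK
  have hdtnn : 0 ≤ d * t ^ (X / 2) := mul_nonneg hd (Real.rpow_nonneg ht.le _)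
  have hKnn : 0 ≤ K := by
    refine mul_nonneg (mul_nonneg (mul_nonneg (Real.rpow_nonneg h4πt.le _)
      (Real.exp_pos _).le) (Real.rpow_nonneg hst.le _)) (Real.rpow_nonneg hdtnn _)
  -- lower bound for the inner space integral, for each s in (t/4, t/2)
  have hF : ∀ s ∈ Set.Ioo (t / 4) (t / 2),
      ENNReal.ofReal (K * ((st / 4) ^ N * ω)) ≤
        ∫⁻ y, ENNReal.ofReal (G N (x - y) (t - s) * ‖y‖ ^ (-γ) * u y s ^ p) := by
    intro s hs
    obtain ⟨hs1, hs2⟩ := hs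
    have hs0 : 0 < s := by linarith
    have hsqrt : st / 2 < Real.sqrt s := by
      have h1 : (st / 2) ^ 2 = t / 4 := by
        rw [div_pow, hstdef, Real.sq_sqrt ht.le]; norm_num
      have h2 := Real.sqrt_lt_sqrt (by positivity : (0:ℝ) ≤ t / 4) hs1
      rwa [← h1, Real.sqrt_sq (by positivity)] at h2
    have hinner : ∀ᵐ y ∂(volume : Measure (EuclideanSpace ℝ (Fin N))),
        y ∈ ball ctr (st / 4) →
        ENNReal.ofReal K ≤ ENNReal.ofReal (G N (x - y) (t - s) * ‖y‖ ^ (-γ) * u y s ^ p) := by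
      filter_upwards [hIH] with y hy hyS
      obtain ⟨hy1, hy2⟩ := hmem y hyS
      have hus : d * t ^ (X / 2) ≤ u y s := by
        refine le_trans ?_ (hy s hs0 (by linarith) (by linarith))
        have : t ^ (X / 2) ≤ s ^ (X / 2) :=
          Real.rpow_le_rpow_of_nonpos hs0 (by linarith) (by linarith)
        exact mul_le_mul_of_nonneg_left this hd
      have hupow : (d * t ^ (X / 2)) ^ p ≤ u y s ^ p :=
        Real.rpow_le_rpow hdtnn hus (by linarith)
      have hγb : st ^ (-γ) ≤ ‖y‖ ^ (-γ) :=
        Real.rpow_le_rpow_of_nonpos hy1 (by linarith) (by linarith)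
      have hG : (4 * Real.pi * t) ^ (-(N : ℝ) / 2) * Real.exp (-(9 / 2)) ≤
          G N (x - y) (t - s) := by
        refine G_lower N ht (by linarith) (by linarith) ?_
        have h3 := norm_sub_le x y
        rw [← hstdef]; linarith
      have hGnn : 0 ≤ G N (x - y) (t - s) :=
        le_trans (mul_nonneg (Real.rpow_nonneg h4πt.le _) (Real.exp_pos _).le) hG
      apply ENNReal.ofReal_le_ofReal
      rw [hK]
      refine mul_le_mul ?_ hupow (Real.rpow_nonneg hdtnn _)
        (mul_nonneg hGnn (Real.rpow_nonneg (norm_nonneg y) _))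
      exact mul_le_mul hG hγb (Real.rpow_nonneg hst.le _) hGnn
    calc ENNReal.ofReal (K * ((st / 4) ^ N * ω))
        = ENNReal.ofReal K * volume (ball ctr (st / 4)) := by
          rw [vol_ball N hN ctr (by positivity : (0:ℝ) ≤ st / 4), ← hω,
            ← ENNReal.ofReal_mul hKnn]
      _ ≤ _ := lintegral_ge measurableSet_ball hinner
  have hchain : ENNReal.ofReal (K * ((st / 4) ^ N * ω) * (t / 4)) ≤ ENNReal.ofReal (u x t) := by
    rw [hkey]
    refine le_trans ?_ (self_le_add_left _ _)
    have hvolI : volume (Set.Ioo (t / 4) (t / 2)) = ENNReal.ofReal (t / 4) := by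
      rw [Real.volume_Ioo]; congr 1; ring
    calc ENNReal.ofReal (K * ((st / 4) ^ N * ω) * (t / 4))
        = ENNReal.ofReal (K * ((st / 4) ^ N * ω)) * volume (Set.Ioo (t / 4) (t / 2)) := by
          rw [hvolI, ← ENNReal.ofReal_mul (by positivity)]
      _ ≤ ∫⁻ s in Set.Ioo (t / 4) (t / 2),
            ∫⁻ y, ENNReal.ofReal (G N (x - y) (t - s) * ‖y‖ ^ (-γ) * u y s ^ p) :=
          setLIntegral_ge measurableSet_Ioo (Filter.Eventually.of_forall hF)
      _ ≤ ∫⁻ s in Set.Ioo (0 : ℝ) t,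
            ∫⁻ y, ENNReal.ofReal (G N (x - y) (t - s) * ‖y‖ ^ (-γ) * u y s ^ p) :=
          lintegral_mono_set (Set.Ioo_subset_Ioo (by linarith) (by linarith))
  have hreal : c2 * d ^ p * t ^ (X / 2) ≤ K * ((st / 4) ^ N * ω) * (t / 4) := by
    apply le_of_eq
    have r1 : (4 * Real.pi * t) ^ (-(N : ℝ) / 2) =
        (4 * Real.pi) ^ (-(N : ℝ) / 2) * (st ^ N)⁻¹ := by
      rw [Real.mul_rpow (by positivity) ht.le]
      congr 1
      rw [sqrt_rpow_half ht (-(N : ℝ)), ← hstdef, Real.rpow_neg hst.le, Real.rpow_natCast]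
    have r2 : t ^ (X / 2) = st ^ X := by rw [sqrt_rpow_half ht X, ← hstdef]
    have r3 : (d * t ^ (X / 2)) ^ p = d ^ p * st ^ (X * p) := by
      rw [r2, Real.mul_rpow hd (Real.rpow_nonneg hst.le _), ← Real.rpow_mul hst.le]
    have r4 : t = st ^ 2 := by rw [hstdef, Real.sq_sqrt ht.le]
    have rmerge : st ^ (-γ) * st ^ (X * p) = st ^ X / st ^ 2 := by
      rw [← Real.rpow_add hst, eq_div_iff (pow_ne_zero 2 hst.ne'),
        ← Real.rpow_natCast st 2, ← Real.rpow_add hst]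
      congr 1
      push_cast
      linarith
    rw [hK, hc2, r1, r3, r2, div_pow]
    rw [show (4 * Real.pi) ^ (-(N : ℝ) / 2) * (st ^ N)⁻¹ * Real.exp (-(9 / 2)) * st ^ (-γ) *
        (d ^ p * st ^ (X * p)) * (st ^ N / 4 ^ N * ω) * (t / 4) =
        (4 * Real.pi) ^ (-(N : ℝ) / 2) * (st ^ N)⁻¹ * Real.exp (-(9 / 2)) *
        (st ^ (-γ) * st ^ (X * p)) * d ^ p * (st ^ N / 4 ^ N * ω) * (t / 4) by ring]
    rw [rmerge]
    rw [r4]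
    have hstN : (st : ℝ) ^ N ≠ 0 := pow_ne_zero _ hst.ne'
    field_simp
  exact (ENNReal.ofReal_le_ofReal_iff (hunn x t)).1
    (le_trans (ENNReal.ofReal_le_ofReal hreal) hchain)

/-- Remark (i), supercritical case, θ = 2. For `p > p_γ = 1 + (2-γ)/N`
there is `C_* > 0` such that if `μ(x) ≥ C_* |x|^{-(2-γ)/(p-1)}` a.e. in a neighborhood of
the origin, then the Hardy parabolic equation with initial data `μ` has no local-in-time
solution. -/
theorem statement5 (N : ℕ) (hN : 1 ≤ N) (p γ : ℝ)
    (hγ0 : 0 < γ) (hγ2 : γ < 2) (hγN : γ < N) (hp : 1 + (2 - γ) / N < p) :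
    ∃ Cstar : ℝ, 0 < Cstar ∧
      ∀ μ : EuclideanSpace ℝ (Fin N) → ℝ, Measurable μ → (∀ x, 0 ≤ μ x) →
      (∃ δ : ℝ, 0 < δ ∧ ∀ᵐ x ∂(volume : Measure (EuclideanSpace ℝ (Fin N))),
          x ∈ Metric.ball (0 : EuclideanSpace ℝ (Fin N)) δ →
          Cstar * ‖x‖ ^ (-(2 - γ) / (p - 1)) ≤ μ x) →
      ∀ T : ℝ, 0 < T →
        ¬∃ u : EuclideanSpace ℝ (Fin N) → ℝ → ℝ, IsSolutionFun N p γ μ T u := by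
  have hNpos : (0 : ℝ) < N := by exact_mod_cast hN
  have hp1 : 1 < p := by
    have h2γ : 0 < (2 - γ) / N := div_pos (by linarith) hNpos
    linarith
  have hppos : 0 < p - 1 := by linarith
  obtain ⟨c1, hc1, hbase⟩ := base_bound N hN p γ hγ2 hp1
  obtain ⟨c2, hc2, hstep⟩ := step_bound N hN p γ hγ0 hγ2 hp1
  set A : ℝ := (2 / c2) ^ (1 / (p - 1)) with hA
  have hApos : 0 < A := Real.rpow_pos_of_pos (by positivity) _
  refine ⟨A / c1, by positivity, ?_⟩
  rintro μ hμmeas hμnn ⟨δ, hδ, hμae⟩ T hT ⟨u, hu⟩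
  set X : ℝ := -(2 - γ) / (p - 1) with hX
  set τ : ℝ := min T (δ ^ 2 / 4) with hτ
  have hτpos : 0 < τ := lt_min hT (by positivity)
  have hτT : τ ≤ T := min_le_left _ _
  set d : ℕ → ℝ := fun k => Nat.rec A (fun _ dk => c2 * dk ^ p) k with hd
  have hd0 : d 0 = A := rfl
  have hdsucc : ∀ k, d (k + 1) = c2 * d k ^ p := fun k => rfl
  have hdpos : ∀ k, 0 < d k := by
    intro k; induction k with
    | zero => exact hApos
    | succ k ih => rw [hdsucc]; exact mul_pos hc2 (Real.rpow_pos_of_pos ih p)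
  have hgrow : ∀ k, A ≤ d k ∧ A * 2 ^ k ≤ d k := by
    intro k; induction k with
    | zero => rw [hd0]; exact ⟨le_refl _, by norm_num⟩
    | succ k ih =>
      have h1 : d k ^ p = d k ^ (p - 1) * d k := by
        have h := Real.rpow_add_one (hdpos k).ne' (p - 1)
        rwa [sub_add_cancel] at h
      have h2 : A ^ (p - 1) ≤ d k ^ (p - 1) :=
        Real.rpow_le_rpow hApos.le ih.1 (by linarith)
      have h3 : c2 * A ^ (p - 1) = 2 := by
        rw [hA, ← Real.rpow_mul (by positivity), one_div, inv_mul_cancel₀ hppos.ne',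
          Real.rpow_one]
        field_simp
      have h4 : 2 * d k ≤ d (k + 1) := by
        rw [hdsucc, h1, ← h3]
        have h5 := mul_le_mul_of_nonneg_left
          (mul_le_mul_of_nonneg_right h2 (hdpos k).le) hc2.le
        linarith
      constructor
      · have := ih.1; have := hdpos k; linarith
      · have := ih.2; rw [pow_succ]; nlinarith
  have hP : ∀ k, ∀ᵐ x ∂(volume : Measure (EuclideanSpace ℝ (Fin N))), ∀ t : ℝ, 0 < t →
      t < τ → ‖x‖ ≤ Real.sqrt t → d k * t ^ (X / 2) ≤ u x t := by
    intro k; induction k with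
    | zero =>
      have hb := hbase μ (A / c1) (by positivity) δ hδ hμae T u hu
      filter_upwards [hb] with x hx t ht htτ hxt
      have h1 := hx t ht (lt_of_lt_of_le htτ hτT)
        (lt_of_lt_of_le htτ (min_le_right _ _)) hxt
      have h2 : c1 * (A / c1) = A := by field_simp
      rw [hd0, ← h2]
      exact h1
    | succ k ih =>
      have hs := hstep μ T u hu τ hτT (d k) (hdpos k).le ih
      filter_upwards [hs] with x hx t ht htτ hxt
      rw [hdsucc]
      exact hx t ht htτ hxt
  set t0 : ℝ := τ / 2 with ht0def
  have ht0 : 0 < t0 := by positivity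
  have ht0τ : t0 < τ := by rw [ht0def]; linarith
  have hAll := ae_all_iff.2 hP
  have hbad : ∀ᵐ x ∂(volume : Measure (EuclideanSpace ℝ (Fin N))),
      x ∉ Metric.ball (0 : EuclideanSpace ℝ (Fin N)) (Real.sqrt t0) := by
    filter_upwards [hAll] with x hx hxB
    rw [mem_ball_zero_iff] at hxB
    have hbnd : ∀ k : ℕ, A * 2 ^ k * t0 ^ (X / 2) ≤ u x t0 := fun k =>
      le_trans (mul_le_mul_of_nonneg_right (hgrow k).2 (Real.rpow_nonneg ht0.le _))
        (hx k t0 ht0 ht0τ hxB.le)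
    obtain ⟨k, hk⟩ := pow_unbounded_of_one_lt (u x t0 / (A * t0 ^ (X / 2))) one_lt_two
    have hpos : 0 < A * t0 ^ (X / 2) := mul_pos hApos (Real.rpow_pos_of_pos ht0 _)
    have hb := hbnd k
    rw [div_lt_iff₀ hpos] at hk
    nlinarith
  have hzero : volume (Metric.ball (0 : EuclideanSpace ℝ (Fin N)) (Real.sqrt t0)) = 0 :=
    measure_eq_zero_iff_ae_notMem.2 hbad
  exact absurd hzero (measure_ball_pos volume 0 (Real.sqrt_pos.2 ht0)).ne'
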